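/- arXiv:1707.01620 — 4 statements merged into one kernel-verified Lean document; each statement's English description precedes it below -/
import Mathlib

section
/- Let C be a pretriangulated category, α : Y → X and β : Z → Y with α ∘ β = 0. Fix distinguished triangles Z →β Y →i_β Cβ →∂_β Z[1] and Y →α X →i_α Cα →∂_α Y[1]. Given any extension f : Cβ → X with f ∘ i_β = α, there exists a co-extension g : Z[1] → Cα with ∂_α ∘ g = -β[1] such that g ∘ ∂_β = i_α ∘ f as morphisms Cβ → Cα. -/
open CategoryTheory Category Limits Pretriangulated

/-- Lemma 5.1, one direction: given an extension `f` of `α` over `Cβ`,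
there is a co-extension `g` of `β` through `Cα` with `g ∘ ∂_β = i_α ∘ f`. -/
theorem coextension_compatible_with_extension {C : Type*} [Category C] [HasZeroObject C]
    [HasShift C ℤ] [Preadditive C] [∀ n : ℤ, (shiftFunctor C n).Additive] [Pretriangulated C]
    {X Y Z Cα Cβ : C} (α : Y ⟶ X) (β : Z ⟶ Y) (hαβ : β ≫ α = 0)
    (iβ : Y ⟶ Cβ) (dβ : Cβ ⟶ Z⟦(1 : ℤ)⟧)
    (hTβ : Triangle.mk β iβ dβ ∈ distTriang C)
    (iα : X ⟶ Cα) (dα : Cα ⟶ Y⟦(1 : ℤ)⟧)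
    (hTα : Triangle.mk α iα dα ∈ distTriang C)
    (f : Cβ ⟶ X) (hf : iβ ≫ f = α) :
    ∃ g : Z⟦(1 : ℤ)⟧ ⟶ Cα, g ≫ dα = -β⟦(1 : ℤ)⟧' ∧ dβ ≫ g = f ≫ iα := by
  obtain ⟨g, hg1, hg2⟩ := complete_distinguished_triangle_morphism
    ((Triangle.mk β iβ dβ).rotate) (Triangle.mk α iα dα)
    (rot_of_distTriang _ hTβ) hTα (𝟙 Y) f (hf.trans (Category.id_comp α).symm)
  refine ⟨g, ?_, hg1⟩
  exact hg2.symm.trans (show (-β⟦(1 : ℤ)⟧') ≫ (𝟙 Y)⟦(1 : ℤ)⟧' = -β⟦(1 : ℤ)⟧' by simp)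
end

section
/- Let C be a pretriangulated category, α : Y → X and β : Z → Y with α ∘ β = 0, with triangles as above. The set of morphisms Cβ → Cα of the form g ∘ ∂_β, where g ranges over co-extensions of β through Cα, equals the set of morphisms of the form i_α ∘ f, where f ranges over extensions of α over Cβ. -/
open CategoryTheory Category Limits Pretriangulated

/-- Lemma 5.1, full set equality: the set of composites `g ∘ ∂_β`,
for `g` ranging over co-extensions of `β` through `Cα`, equals the set of
composites `i_α ∘ f`, for `f` ranging over extensions of `α` over `Cβ`. -/
theorem coextension_set_eq_extension_set {C : Type*} [Category C] [HasZeroObject C]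
    [HasShift C ℤ] [Preadditive C] [∀ n : ℤ, (shiftFunctor C n).Additive] [Pretriangulated C]
    {X Y Z Cα Cβ : C} (α : Y ⟶ X) (β : Z ⟶ Y) (hαβ : β ≫ α = 0)
    (iβ : Y ⟶ Cβ) (dβ : Cβ ⟶ Z⟦(1 : ℤ)⟧)
    (hTβ : Triangle.mk β iβ dβ ∈ distTriang C)
    (iα : X ⟶ Cα) (dα : Cα ⟶ Y⟦(1 : ℤ)⟧)
    (hTα : Triangle.mk α iα dα ∈ distTriang C) :
    {φ : Cβ ⟶ Cα | ∃ g : Z⟦(1 : ℤ)⟧ ⟶ Cα, g ≫ dα = -β⟦(1 : ℤ)⟧' ∧ φ = dβ ≫ g} =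
      {φ : Cβ ⟶ Cα | ∃ f : Cβ ⟶ X, iβ ≫ f = α ∧ φ = f ≫ iα} := by
  have hrot := rot_of_distTriang _ hTβ
  ext φ
  constructor
  · rintro ⟨g, hg, rfl⟩
    obtain ⟨f, hf₁, hf₂⟩ := complete_distinguished_triangle_morphism₂
      ((Triangle.mk β iβ dβ).rotate) (Triangle.mk α iα dα) hrot hTα (𝟙 Y) g
      (by change (-β⟦(1 : ℤ)⟧') ≫ (𝟙 Y)⟦(1 : ℤ)⟧' = g ≫ dα; rw [hg]; simp)
    refine ⟨f, by have h : iβ ≫ f = 𝟙 Y ≫ α := hf₁; rw [id_comp] at h; exact h,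
      by have h : dβ ≫ g = f ≫ iα := hf₂; exact h⟩
  · rintro ⟨f, hf, rfl⟩
    obtain ⟨g, hg₁, hg₂⟩ := Pretriangulated.complete_distinguished_triangle_morphism
      ((Triangle.mk β iβ dβ).rotate) (Triangle.mk α iα dα) hrot hTα (𝟙 Y) f
      (by change iβ ≫ f = 𝟙 Y ≫ α; rw [hf]; simp)
    exact ⟨g, by have h : (-β⟦(1 : ℤ)⟧') ≫ (𝟙 Y)⟦(1 : ℤ)⟧' = g ≫ dα := hg₂; rw [CategoryTheory.Functor.map_id, comp_id] at h; exact h.symm,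
      by have h : dβ ≫ g = f ≫ iα := hg₁; exact h.symm⟩
end

section
/- Let C be a pretriangulated category and W →γ Z →β Y →α X morphisms with α ∘ β = 0 and β ∘ γ = 0. Fix distinguished triangles on α, β, γ with cofibers Cα, Cβ, Cγ. Then for any choices of an extension f : Cβ → X of α and a co-extension g' : W[1] → Cβ of γ, there exist a co-extension g : Z[1] → Cα of β such that -g ∘ γ[1] = i_α ∘ f ∘ g' as morphisms W[1] → Cα. -/
open CategoryTheory Category Limits Pretriangulated

/-- Lemma 5.2, one containment: for any extension `f : Cβ ⟶ X` of `α`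
and any co-extension `g' : W⟦1⟧ ⟶ Cβ` of `γ`, there is a co-extension `g : Z⟦1⟧ ⟶ Cα`
of `β` such that `-g ∘ γ⟦1⟧ = i_α ∘ f ∘ g'`. -/
theorem lemma52_containment {C : Type*} [Category C] [HasZeroObject C]
    [HasShift C ℤ] [Preadditive C] [∀ n : ℤ, (shiftFunctor C n).Additive] [Pretriangulated C]
    {W X Y Z Cα Cβ Cγ : C} (α : Y ⟶ X) (β : Z ⟶ Y) (γ : W ⟶ Z)
    (hαβ : β ≫ α = 0) (hβγ : γ ≫ β = 0)
    (iα : X ⟶ Cα) (dα : Cα ⟶ Y⟦(1 : ℤ)⟧)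
    (hTα : Triangle.mk α iα dα ∈ distTriang C)
    (iβ : Y ⟶ Cβ) (dβ : Cβ ⟶ Z⟦(1 : ℤ)⟧)
    (hTβ : Triangle.mk β iβ dβ ∈ distTriang C)
    (iγ : Z ⟶ Cγ) (dγ : Cγ ⟶ W⟦(1 : ℤ)⟧)
    (hTγ : Triangle.mk γ iγ dγ ∈ distTriang C)
    (f : Cβ ⟶ X) (hf : iβ ≫ f = α)
    (g' : W⟦(1 : ℤ)⟧ ⟶ Cβ) (hg' : g' ≫ dβ = -γ⟦(1 : ℤ)⟧') :
    ∃ g : Z⟦(1 : ℤ)⟧ ⟶ Cα, g ≫ dα = -β⟦(1 : ℤ)⟧' ∧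
      -(γ⟦(1 : ℤ)⟧' ≫ g) = g' ≫ f ≫ iα := by
  have hTγ2 : (Triangle.mk γ iγ dγ).rotate.rotate ∈ distTriang C :=
    rot_of_distTriang _ (rot_of_distTriang _ hTγ)
  -- Step 1: complete (g', 𝟙) to a triangle morphism rot² Tγ ⟶ rot Tβ
  obtain ⟨a, ha₁, ha₂⟩ := complete_distinguished_triangle_morphism₁
    (Triangle.mk γ iγ dγ).rotate.rotate (Triangle.mk β iβ dβ).rotate
    hTγ2 (rot_of_distTriang _ hTβ) g' (𝟙 _)
    (by exact (comp_id _).trans hg'.symm)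
  change dγ ≫ g' = a ≫ iβ at ha₁
  change (-iγ⟦(1 : ℤ)⟧') ≫ (a⟦(1 : ℤ)⟧') = 𝟙 _ ≫ (-β⟦(1 : ℤ)⟧') at ha₂
  rw [id_comp] at ha₂
  -- Step 2: complete (a, g' ≫ f) to a triangle morphism rot² Tγ ⟶ Tα
  obtain ⟨g, hg₁, hg₂⟩ := complete_distinguished_triangle_morphism
    (Triangle.mk γ iγ dγ).rotate.rotate (Triangle.mk α iα dα)
    hTγ2 hTα a (g' ≫ f)
    (by change dγ ≫ g' ≫ f = a ≫ α; exact (assoc _ _ _).symm.trans ((congrArg (· ≫ f) ha₁).trans ((assoc _ _ _).trans (congrArg (a ≫ ·) hf))))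
  change (-γ⟦(1 : ℤ)⟧') ≫ g = (g' ≫ f) ≫ iα at hg₁
  change (-iγ⟦(1 : ℤ)⟧') ≫ (a⟦(1 : ℤ)⟧') = g ≫ dα at hg₂
  refine ⟨g, ?_, ?_⟩
  · exact hg₂.symm.trans ha₂
  · exact (Preadditive.neg_comp _ _).symm.trans (hg₁.trans (assoc _ _ _))
end

section
/- Let C be a pretriangulated category with W →γ Z →β Y →α X satisfying α ∘ β = 0 and β ∘ γ = 0, with distinguished triangles on α, β, γ as above. The coset of morphisms W[1] → Cα of the form -g ∘ γ[1] (g ranging over co-extensions of β through Cα) and the coset i_α ∘ f ∘ g' (f ranging over extensions of α over Cβ, g' over co-extensions of γ through Cβ) have the same indeterminacy, namely i_α ∘ Hom(Z[1], X) ∘ γ[1]. -/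
open CategoryTheory Category Limits Pretriangulated

/-- Lemma 5.2, indeterminacies: the set `-L^α β ∘ γ⟦1⟧` and the set
`i_α ∘ L_β α ∘ L^β γ` in `Hom(W⟦1⟧, Cα)` both have indeterminacy exactly
`i_α ∘ Hom(Z⟦1⟧, X) ∘ γ⟦1⟧`: differences of any two elements of either set lie in
this subgroup, and either set is stable under adding elements of this subgroup. -/
theorem lemma52_indeterminacy {C : Type*} [Category C] [HasZeroObject C]
    [HasShift C ℤ] [Preadditive C] [∀ n : ℤ, (shiftFunctor C n).Additive] [Pretriangulated C]
    {W X Y Z Cα Cβ : C} (α : Y ⟶ X) (β : Z ⟶ Y) (γ : W ⟶ Z)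
    (hαβ : β ≫ α = 0) (hβγ : γ ≫ β = 0)
    (iα : X ⟶ Cα) (dα : Cα ⟶ Y⟦(1 : ℤ)⟧)
    (hTα : Triangle.mk α iα dα ∈ distTriang C)
    (iβ : Y ⟶ Cβ) (dβ : Cβ ⟶ Z⟦(1 : ℤ)⟧)
    (hTβ : Triangle.mk β iβ dβ ∈ distTriang C) :
    -- the two cosets in `Hom(W⟦1⟧, Cα)`
    (let A : Set (W⟦(1 : ℤ)⟧ ⟶ Cα) :=
      {φ | ∃ g : Z⟦(1 : ℤ)⟧ ⟶ Cα, g ≫ dα = -β⟦(1 : ℤ)⟧' ∧ φ = -(γ⟦(1 : ℤ)⟧' ≫ g)}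
    let B : Set (W⟦(1 : ℤ)⟧ ⟶ Cα) :=
      {φ | ∃ (f : Cβ ⟶ X) (g' : W⟦(1 : ℤ)⟧ ⟶ Cβ),
        iβ ≫ f = α ∧ g' ≫ dβ = -γ⟦(1 : ℤ)⟧' ∧ φ = g' ≫ f ≫ iα}
    -- the common indeterminacy `i_α ∘ Hom(Z⟦1⟧, X) ∘ γ⟦1⟧`
    let S : Set (W⟦(1 : ℤ)⟧ ⟶ Cα) :=
      {φ | ∃ h : Z⟦(1 : ℤ)⟧ ⟶ X, φ = γ⟦(1 : ℤ)⟧' ≫ h ≫ iα}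
    (∀ a ∈ A, ∀ a' ∈ A, a - a' ∈ S) ∧ (∀ a ∈ A, ∀ s ∈ S, a + s ∈ A) ∧
      (∀ b ∈ B, ∀ b' ∈ B, b - b' ∈ S) ∧ (∀ b ∈ B, ∀ s ∈ S, b + s ∈ B)) := by
  intro A B S
  have hiαdα : iα ≫ dα = 0 := comp_distTriang_mor_zero₂₃ _ hTα
  have hαiα : α ≫ iα = 0 := comp_distTriang_mor_zero₁₂ _ hTα
  have hiβdβ : iβ ≫ dβ = 0 := comp_distTriang_mor_zero₂₃ _ hTβ
  refine ⟨?_, ?_, ?_, ?_⟩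
  · rintro a ⟨g, hg, rfl⟩ a' ⟨g', hg', rfl⟩
    have h0 : (g - g') ≫ dα = 0 := by
      rw [Preadditive.sub_comp, hg, hg', sub_self]
    obtain ⟨h, hh⟩ := Triangle.coyoneda_exact₃ _ hTα (g - g') h0
    refine ⟨-h, ?_⟩
    have : -(γ⟦(1 : ℤ)⟧' ≫ g) - -(γ⟦(1 : ℤ)⟧' ≫ g') = γ⟦(1 : ℤ)⟧' ≫ (-(g - g')) := by
      simp [Preadditive.comp_sub]
      abel
    rw [this, hh]
    simp [Preadditive.comp_neg, Preadditive.neg_comp]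
    exact congrArg _ (Preadditive.neg_comp _ _).symm
  · rintro a ⟨g, hg, rfl⟩ s ⟨h, rfl⟩
    refine ⟨g - h ≫ iα, ?_, ?_⟩
    · rw [Preadditive.sub_comp, assoc, hiαdα, comp_zero, sub_zero, hg]
    · simp [Preadditive.comp_sub]
      abel
  · rintro b ⟨f, g', hf, hg', rfl⟩ b' ⟨f₂, g₂', hf₂, hg₂', rfl⟩
    have h1 : iβ ≫ (f - f₂) = 0 := by
      rw [Preadditive.comp_sub, hf, hf₂, sub_self]
    obtain ⟨k, hk⟩ : ∃ k : Z⟦(1 : ℤ)⟧ ⟶ X, f - f₂ = dβ ≫ k :=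
      Triangle.yoneda_exact₃ _ hTβ (f - f₂) h1
    have h2 : (g' - g₂') ≫ dβ = 0 := by
      rw [Preadditive.sub_comp, hg', hg₂', sub_self]
    obtain ⟨v, hv⟩ : ∃ v : W⟦(1 : ℤ)⟧ ⟶ Y, g' - g₂' = v ≫ iβ :=
      Triangle.coyoneda_exact₃ _ hTβ (g' - g₂') h2
    refine ⟨-k, ?_⟩
    have expand : g' ≫ f ≫ iα - g₂' ≫ f₂ ≫ iα
        = g' ≫ (f - f₂) ≫ iα + (g' - g₂') ≫ f₂ ≫ iα := by
      simp [Preadditive.sub_comp, Preadditive.comp_sub]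
    rw [expand, hk, hv]
    have e1 : g' ≫ (dβ ≫ k) ≫ iα = (g' ≫ dβ) ≫ k ≫ iα := by simp
    have e2 : (v ≫ iβ) ≫ f₂ ≫ iα = v ≫ (iβ ≫ f₂) ≫ iα := by simp
    rw [e1, e2, hg', hf₂, hαiα]
    simp
  · rintro b ⟨f, g', hf, hg', rfl⟩ s ⟨h, rfl⟩
    refine ⟨f - dβ ≫ h, g', ?_, hg', ?_⟩
    · rw [Preadditive.comp_sub, hf, ← assoc, hiβdβ, zero_comp, sub_zero]
    · have : γ⟦(1 : ℤ)⟧' ≫ h ≫ iα = -(g' ≫ (dβ ≫ h) ≫ iα) := by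
        rw [show g' ≫ (dβ ≫ h) ≫ iα = (g' ≫ dβ) ≫ h ≫ iα from by simp, hg']
        simp
      rw [this]
      simp [Preadditive.comp_sub, Preadditive.sub_comp]
      abel
end
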